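/- Let V be a real vector space with nondegenerate symmetric bilinear form g of signature (p,q) with p ≤ q, let Π be a totally degenerate subspace of maximal dimension r = p with basis {k_1,…,k_r}, and let T be an r-dimensional subspace on which g is negative definite. Decompose each v ∈ V as v = v^∥ + v^⊥ with respect to the orthogonal direct sum V = T ⊕ T⊥. Then both the sets {k_1^∥,…,k_r^∥} and {k_1^⊥,…,k_r^⊥} are linearly independent. -/

import Mathlib

/-- Lemma B.2 (i),(ii): for a maximal totally degenerate subspace Π with basis {k_i} of a
space of signature (p,q), p ≤ q, and an orthogonal decomposition V = T ⊕ T⊥ with g|_T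
negative definite of dimension p, both families of projections {k_i^∥} and {k_i^⊥} are
linearly independent. -/
theorem projections_of_degenerate_basis_linearIndependent
    (p q : ℕ) (hpq : p ≤ q) (V : Type*) [AddCommGroup V] [Module ℝ V]
    (B : V →ₗ[ℝ] V →ₗ[ℝ] ℝ)
    (b : Module.Basis (Fin p ⊕ Fin q) ℝ V)
    (hb : ∀ i j, B (b i) (b j) =
      if i = j then Sum.elim (fun _ => (-1 : ℝ)) (fun _ => (1 : ℝ)) i else 0)
    (k : Fin p → V) (hk : LinearIndependent ℝ k)
    (hdeg : ∀ i j, B (k i) (k j) = 0)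
    (T : Submodule ℝ V) (hT : Module.finrank ℝ T = p)
    (hneg : ∀ v ∈ T, v ≠ 0 → B v v < 0)
    (kpar kperp : Fin p → V)
    (hpar : ∀ i, kpar i ∈ T)
    (hperp : ∀ i, ∀ t ∈ T, B t (kperp i) = 0)
    (hsum : ∀ i, k i = kpar i + kperp i) :
    LinearIndependent ℝ kpar ∧ LinearIndependent ℝ kperp := by
  haveI : Module.Finite ℝ V := Module.Finite.of_basis b
  have hsymm : ∀ x y : V, B x y = B y x := by
    have hBf : B = B.flip := by
      apply b.ext; intro i
      apply b.ext; intro j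
      simp only [LinearMap.flip_apply, hb]
      rcases eq_or_ne i j with rfl | h
      · simp
      · simp [h, Ne.symm h]
    intro x y
    conv_lhs => rw [hBf]
    rfl
  -- B of a combination of the k's with itself is 0
  have hcomb0 : ∀ c : Fin p → ℝ, B (∑ i, c i • k i) (∑ i, c i • k i) = 0 := by
    intro c
    simp only [map_sum, map_smul, LinearMap.sum_apply, LinearMap.smul_apply,
      smul_eq_mul, hdeg, mul_zero, Finset.sum_const_zero]
  -- (ii) kperp, the easy one
  have hperp_li : LinearIndependent ℝ kperp := by
    rw [Fintype.linearIndependent_iff]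
    intro c hc
    have hu : ∑ i, c i • k i = ∑ i, c i • kpar i := by
      simp only [hsum, smul_add, Finset.sum_add_distrib, hc, add_zero]
    have huT : (∑ i, c i • kpar i) ∈ T :=
      Submodule.sum_mem _ fun i _ => Submodule.smul_mem _ _ (hpar i)
    have hu0 : (∑ i, c i • kpar i) = 0 := by
      by_contra h0
      have := hneg _ huT h0
      rw [← hu, hcomb0 c] at this
      exact lt_irrefl 0 this
    have : ∑ i, c i • k i = 0 := by rw [hu, hu0]
    exact Fintype.linearIndependent_iff.mp hk c this
  refine ⟨?_, hperp_li⟩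
  -- the positive definite subspace
  set P : Submodule ℝ V := Submodule.span ℝ (Set.range (⇑b ∘ Sum.inr)) with hPdef
  have hPpos : ∀ v ∈ P, v ≠ 0 → 0 < B v v := by
    intro v hv hv0
    obtain ⟨a, ha⟩ := (Submodule.mem_span_range_iff_exists_fun ℝ).mp hv
    have hBvv : B v v = ∑ j, (a j) ^ 2 := by
      rw [← ha]
      simp only [map_sum, map_smul, LinearMap.sum_apply, LinearMap.smul_apply,
        smul_eq_mul, hb, Function.comp_apply]
      simp [Sum.inr.injEq, mul_ite, mul_zero, mul_one, Finset.sum_ite_eq,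
        Finset.mem_univ, sq, mul_comm]
    obtain ⟨j, hj⟩ : ∃ j, a j ≠ 0 := by
      by_contra h; push_neg at h
      apply hv0; rw [← ha]; simp [h]
    rw [hBvv]
    exact Finset.sum_pos' (fun j _ => sq_nonneg _)
      ⟨j, Finset.mem_univ j, by positivity⟩
  have hrankP : Module.finrank ℝ P = q := by
    rw [hPdef, finrank_span_eq_card (b.linearIndependent.comp Sum.inr Sum.inr_injective)]
    simp
  have hrankV : Module.finrank ℝ V = p + q := by
    rw [Module.finrank_eq_card_basis b]; simp
  -- (i) kpar
  rw [Fintype.linearIndependent_iff]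
  intro c hc
  set w : V := ∑ i, c i • kperp i with hwdef
  have hw : ∑ i, c i • k i = w := by
    simp only [hwdef, hsum, smul_add, Finset.sum_add_distrib, hc, zero_add]
  have hww : B w w = 0 := by rw [← hw]; exact hcomb0 c
  have htw : ∀ t ∈ T, B t w = 0 := by
    intro t ht
    rw [hwdef, map_sum]
    exact Finset.sum_eq_zero fun i _ => by
      rw [map_smul, smul_eq_mul, hperp i t ht, mul_zero]
  have hw0 : w = 0 := by
    by_contra hw0
    have hwT : w ∉ T := fun hwT => absurd hww (ne_of_lt (hneg w hwT hw0))
    set W : Submodule ℝ V := T ⊔ (Submodule.span ℝ {w}) with hWdef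
    have hWneg : ∀ v ∈ W, B v v ≤ 0 := by
      intro v hv
      obtain ⟨t, ht, x, hx, rfl⟩ := Submodule.mem_sup.mp hv
      obtain ⟨d, rfl⟩ := Submodule.mem_span_singleton.mp hx
      have : B (t + d • w) (t + d • w) = B t t := by
        simp only [map_add, map_smul, LinearMap.add_apply, LinearMap.smul_apply,
          smul_eq_mul, htw t ht, hww, hsymm w t, htw t ht]
        ring
      rw [this]
      rcases eq_or_ne t 0 with rfl | ht0
      · simp
      · exact le_of_lt (hneg t ht ht0)
    have hdisj : W ⊓ P = ⊥ := by
      rw [Submodule.eq_bot_iff]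
      intro v ⟨hvW, hvP⟩
      by_contra hv0
      exact absurd (hPpos v hvP hv0) (not_lt.mpr (hWneg v hvW))
    have hTw : T ⊓ (Submodule.span ℝ {w}) = ⊥ := by
      rw [Submodule.eq_bot_iff]
      intro x ⟨hxT, hxw⟩
      obtain ⟨d, rfl⟩ := Submodule.mem_span_singleton.mp hxw
      rcases eq_or_ne d 0 with rfl | hd
      · simp
      · exact absurd (by simpa [hd] using T.smul_mem d⁻¹ hxT) hwT
    have hrankW : Module.finrank ℝ W = p + 1 := by
      have := Submodule.finrank_sup_add_finrank_inf_eq T (Submodule.span ℝ {w})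
      rw [hTw, finrank_bot, add_zero, hT, finrank_span_singleton hw0] at this
      rw [hWdef, this]
    have hle : Module.finrank ℝ ↥(W ⊔ P) ≤ p + q := hrankV ▸ Submodule.finrank_le _
    have := Submodule.finrank_sup_add_finrank_inf_eq W P
    rw [hdisj, finrank_bot, add_zero, hrankW, hrankP] at this
    omega
  have : ∑ i, c i • k i = 0 := by rw [hw, hw0]
  exact Fintype.linearIndependent_iff.mp hk c this
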